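/- arXiv:0812.0904 — 3 statements merged into one kernel-verified Lean document; each statement's English description precedes it below -/
import Mathlib

section
/- (Single step of Lemma 1.) Let g_1,…,g_N ≥ 0, a_1,…,a_{N-1} > 0, E_1 > 0, and noise powers σ_1²,…,σ_N² > 0. For 1 ≤ n ≤ N define the n-hop end-to-end SNR γ_n = (∏_{i=1}^{n-1} a_i · ∏_{i=1}^{n} g_i · E_1) / (Σ_{j=1}^{n-1} (∏_{i=j}^{n-1} a_i g_{i+1}) σ_j² + σ_n²). Then for every 1 ≤ n ≤ N−1, γ_{n+1} ≤ γ_n. -/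
open Finset

/-- single step of Lemma 1: the n-hop end-to-end SNR is nonincreasing
in the number of hops, one step at a time: `γ (n+1) ≤ γ n` for `1 ≤ n ≤ N-1`. -/
theorem multihop_AF_snr_step_monotone
    (N : ℕ) (g a σ2 : ℕ → ℝ) (E1 : ℝ)
    (hg : ∀ i ∈ Finset.Icc 1 N, 0 ≤ g i)
    (ha : ∀ i ∈ Finset.Icc 1 (N - 1), 0 < a i)
    (hE1 : 0 < E1)
    (hσ : ∀ j ∈ Finset.Icc 1 N, 0 < σ2 j)
    (γ : ℕ → ℝ)
    (hγ : ∀ n ∈ Finset.Icc 1 N,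
      γ n = ((∏ i ∈ Finset.Icc 1 (n - 1), a i) * (∏ i ∈ Finset.Icc 1 n, g i) * E1) /
        ((∑ j ∈ Finset.Icc 1 (n - 1),
            (∏ i ∈ Finset.Icc j (n - 1), a i * g (i + 1)) * σ2 j) + σ2 n)) :
    ∀ n, 1 ≤ n → n ≤ N - 1 → γ (n + 1) ≤ γ n := by
  intro n h1 h2
  have hN2 : 2 ≤ N := by omega
  have hn1 : n ∈ Finset.Icc 1 N := by simp; omega
  have hn2 : n + 1 ∈ Finset.Icc 1 N := by simp; omega
  rw [hγ n hn1, hγ (n + 1) hn2]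
  have hsucc : n + 1 - 1 = n := by omega
  rw [hsucc]
  set P := (∏ i ∈ Finset.Icc 1 (n - 1), a i) * (∏ i ∈ Finset.Icc 1 n, g i) with hPdef
  set S := ∑ j ∈ Finset.Icc 1 (n - 1),
      (∏ i ∈ Finset.Icc j (n - 1), a i * g (i + 1)) * σ2 j with hSdef
  set c := a n * g (n + 1) with hcdef
  -- rewrite products
  have hne : n = (n - 1) + 1 := by omega
  have hA : (∏ i ∈ Finset.Icc 1 n, a i)
      = (∏ i ∈ Finset.Icc 1 (n - 1), a i) * a n := by
    conv_lhs => rw [hne]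
    rw [Finset.prod_Icc_succ_top (by omega)]
    rw [← hne]
  have hG : (∏ i ∈ Finset.Icc 1 (n + 1), g i)
      = (∏ i ∈ Finset.Icc 1 n, g i) * g (n + 1) := by
    rw [Finset.prod_Icc_succ_top (by omega)]
  have hSum : (∑ j ∈ Finset.Icc 1 n, (∏ i ∈ Finset.Icc j n, a i * g (i + 1)) * σ2 j)
      = c * S + c * σ2 n := by
    conv_lhs => rw [hne]
    rw [Finset.sum_Icc_succ_top (by omega), ← hne]
    have hterm : ∀ j ∈ Finset.Icc 1 (n - 1),
        (∏ i ∈ Finset.Icc j n, a i * g (i + 1)) * σ2 j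
          = c * ((∏ i ∈ Finset.Icc j (n - 1), a i * g (i + 1)) * σ2 j) := by
      intro j hj
      simp only [Finset.mem_Icc] at hj
      have : (∏ i ∈ Finset.Icc j n, a i * g (i + 1))
          = (∏ i ∈ Finset.Icc j (n - 1), a i * g (i + 1)) * (a n * g (n + 1)) := by
        conv_lhs => rw [hne]
        rw [Finset.prod_Icc_succ_top (by omega), ← hne]
      rw [this, hcdef]; ring
    rw [Finset.sum_congr rfl hterm, ← Finset.mul_sum, ← hSdef]
    have : Finset.Icc n n = {n} := Finset.Icc_self n
    rw [this, Finset.prod_singleton, ← hcdef]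
  rw [hA, hG, hSum]
  -- positivity facts
  have hSnn : 0 ≤ S := by
    apply Finset.sum_nonneg
    intro j hj
    simp only [Finset.mem_Icc] at hj
    apply mul_nonneg
    · apply Finset.prod_nonneg
      intro i hi
      simp only [Finset.mem_Icc] at hi
      exact mul_nonneg (le_of_lt (ha i (by simp; omega))) (hg (i + 1) (by simp; omega))
    · exact le_of_lt (hσ j (by simp; omega))
  have hcnn : 0 ≤ c :=
    mul_nonneg (le_of_lt (ha n (by simp; omega))) (hg (n + 1) (by simp; omega))
  have hPnn : 0 ≤ P := by
    apply mul_nonneg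
    · apply Finset.prod_nonneg
      intro i hi
      simp only [Finset.mem_Icc] at hi
      exact le_of_lt (ha i (by simp; omega))
    · apply Finset.prod_nonneg
      intro i hi
      simp only [Finset.mem_Icc] at hi
      exact hg i (by simp; omega)
  have hσn : 0 < σ2 n := hσ n hn1
  have hσn1 : 0 < σ2 (n + 1) := hσ (n + 1) hn2
  have hD1 : 0 < S + σ2 n := by linarith
  have hD2 : 0 < c * S + c * σ2 n + σ2 (n + 1) := by nlinarith
  rw [div_le_div_iff₀ hD2 hD1]
  have hP' : (∏ i ∈ Finset.Icc 1 (n - 1), a i) * a n * ((∏ i ∈ Finset.Icc 1 n, g i) * g (n + 1))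
      = P * c := by rw [hPdef, hcdef]; ring
  rw [hP']
  nlinarith [mul_nonneg (mul_nonneg hPnn (le_of_lt hE1)) (le_of_lt hσn1),
    mul_nonneg hPnn hcnn]
end

section
/- (Lemma 1, SNR part.) Let g_1,…,g_N ≥ 0, a_1,…,a_{N-1} > 0, E_1 > 0, and noise powers σ_1²,…,σ_N² > 0, and for 1 ≤ n ≤ N let γ_n denote the n-hop end-to-end SNR. Then as the number of hops increases, the end-to-end SNR is nonincreasing: γ_N ≤ γ_{N-1} ≤ ⋯ ≤ γ_2 ≤ γ_1; equivalently, γ_m ≤ γ_n whenever 1 ≤ n ≤ m ≤ N. -/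
open Finset

/-- Lemma 1, SNR part: the end-to-end SNR is nonincreasing in the
number of hops: `γ m ≤ γ n` whenever `1 ≤ n ≤ m ≤ N`. -/
theorem multihop_AF_snr_monotone
    (N : ℕ) (g a σ2 : ℕ → ℝ) (E1 : ℝ)
    (hg : ∀ i ∈ Finset.Icc 1 N, 0 ≤ g i)
    (ha : ∀ i ∈ Finset.Icc 1 (N - 1), 0 < a i)
    (hE1 : 0 < E1)
    (hσ : ∀ j ∈ Finset.Icc 1 N, 0 < σ2 j)
    (γ : ℕ → ℝ)
    (hγ : ∀ n ∈ Finset.Icc 1 N,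
      γ n = ((∏ i ∈ Finset.Icc 1 (n - 1), a i) * (∏ i ∈ Finset.Icc 1 n, g i) * E1) /
        ((∑ j ∈ Finset.Icc 1 (n - 1),
            (∏ i ∈ Finset.Icc j (n - 1), a i * g (i + 1)) * σ2 j) + σ2 n)) :
    ∀ n m, 1 ≤ n → n ≤ m → m ≤ N → γ m ≤ γ n := by
  have key : ∀ n, 1 ≤ n → n + 1 ≤ N → γ (n + 1) ≤ γ n := by
    intro n hn1 hnN
    obtain ⟨m, rfl⟩ : ∃ m, n = m + 1 := ⟨n - 1, by omega⟩
    rw [hγ (m + 1) (Finset.mem_Icc.mpr ⟨by omega, by omega⟩),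
        hγ (m + 1 + 1) (Finset.mem_Icc.mpr ⟨by omega, by omega⟩)]
    simp only [Nat.add_sub_cancel]
    rw [Finset.prod_Icc_succ_top (by omega : 1 ≤ m + 1) a,
        Finset.prod_Icc_succ_top (by omega : 1 ≤ m + 2) g,
        Finset.sum_Icc_succ_top (by omega : 1 ≤ m + 1)]
    have hsum : ∀ j ∈ Finset.Icc 1 m,
        (∏ i ∈ Finset.Icc j (m + 1), a i * g (i + 1)) * σ2 j
          = ((∏ i ∈ Finset.Icc j m, a i * g (i + 1)) * σ2 j) * (a (m + 1) * g (m + 2)) := by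
      intro j hj
      rw [Finset.mem_Icc] at hj
      rw [Finset.prod_Icc_succ_top (by omega : j ≤ m + 1)]
      ring
    rw [Finset.sum_congr rfl hsum, ← Finset.sum_mul, Finset.Icc_self, Finset.prod_singleton]
    set c : ℝ := a (m + 1) * g (m + 2) with hc
    set A : ℝ := ∏ i ∈ Finset.Icc 1 m, a i with hA
    set G : ℝ := ∏ i ∈ Finset.Icc 1 (m + 1), g i with hG
    set S : ℝ := ∑ j ∈ Finset.Icc 1 m, (∏ i ∈ Finset.Icc j m, a i * g (i + 1)) * σ2 j with hS
    have ham : 0 < a (m + 1) := ha _ (Finset.mem_Icc.mpr ⟨by omega, by omega⟩)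
    have hgm : 0 ≤ g (m + 2) := hg _ (Finset.mem_Icc.mpr ⟨by omega, by omega⟩)
    have hcpos : 0 ≤ c := mul_nonneg ham.le hgm
    have hApos : 0 < A := by
      apply Finset.prod_pos
      intro i hi
      rw [Finset.mem_Icc] at hi
      exact ha i (Finset.mem_Icc.mpr ⟨hi.1, by omega⟩)
    have hGpos : 0 ≤ G := by
      apply Finset.prod_nonneg
      intro i hi
      rw [Finset.mem_Icc] at hi
      exact hg i (Finset.mem_Icc.mpr ⟨hi.1, by omega⟩)
    have hSpos : 0 ≤ S := by
      apply Finset.sum_nonneg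
      intro j hj
      rw [Finset.mem_Icc] at hj
      have : 0 ≤ ∏ i ∈ Finset.Icc j m, a i * g (i + 1) := by
        apply Finset.prod_nonneg
        intro i hi
        rw [Finset.mem_Icc] at hi
        exact mul_nonneg (ha i (Finset.mem_Icc.mpr ⟨by omega, by omega⟩)).le
          (hg (i + 1) (Finset.mem_Icc.mpr ⟨by omega, by omega⟩))
      exact mul_nonneg this (hσ j (Finset.mem_Icc.mpr ⟨hj.1, by omega⟩)).le
    have hσ1 : 0 < σ2 (m + 1) := hσ _ (Finset.mem_Icc.mpr ⟨by omega, by omega⟩)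
    have hσ2 : 0 < σ2 (m + 2) := hσ _ (Finset.mem_Icc.mpr ⟨by omega, by omega⟩)
    rw [div_le_div_iff₀ (by positivity) (by positivity)]
    have hnum : 0 ≤ A * G * E1 := by positivity
    rw [hc]
    nlinarith [mul_nonneg hnum hσ2.le]
  intro n m hn hnm hmN
  induction m with
  | zero => omega
  | succ k ih =>
    rcases Nat.lt_or_ge n (k + 1) with h | h
    · calc γ (k + 1) ≤ γ k := key k (by omega) (by omega)
        _ ≤ γ n := ih (by omega) (by omega)
    · have : n = k + 1 := by omega
      rw [this]
end

section
/- (Lemma 1, outage part.) Let g_1,…,g_N be nonnegative random variables on a probability space, let a_1,…,a_{N-1} > 0, E_1 > 0, and noise powers σ_1²,…,σ_N² > 0, and for 1 ≤ n ≤ N let γ_n denote the (random) n-hop end-to-end SNR. Then for every threshold γ_Th > 0, the outage probability is nondecreasing in the number of hops: P(γ_1 < γ_Th) ≤ P(γ_2 < γ_Th) ≤ ⋯ ≤ P(γ_N < γ_Th). -/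
open Finset MeasureTheory

/-- Lemma 1, outage part: the outage probability is nondecreasing in
the number of hops: `P(γ n < γ_Th) ≤ P(γ m < γ_Th)` whenever `1 ≤ n ≤ m ≤ N`. -/
theorem multihop_AF_outage_monotone
    {Ω : Type*} [MeasurableSpace Ω] (μ : Measure Ω) [IsProbabilityMeasure μ]
    (N : ℕ) (g : ℕ → Ω → ℝ) (a σ2 : ℕ → ℝ) (E1 γTh : ℝ)
    (hmeas : ∀ i ∈ Finset.Icc 1 N, Measurable (g i))
    (hg : ∀ i ∈ Finset.Icc 1 N, ∀ ω, 0 ≤ g i ω)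
    (ha : ∀ i ∈ Finset.Icc 1 (N - 1), 0 < a i)
    (hE1 : 0 < E1)
    (hσ : ∀ j ∈ Finset.Icc 1 N, 0 < σ2 j)
    (hγTh : 0 < γTh)
    (γ : ℕ → Ω → ℝ)
    (hγ : ∀ n ∈ Finset.Icc 1 N, ∀ ω,
      γ n ω = ((∏ i ∈ Finset.Icc 1 (n - 1), a i) * (∏ i ∈ Finset.Icc 1 n, g i ω) * E1) /
        ((∑ j ∈ Finset.Icc 1 (n - 1),
            (∏ i ∈ Finset.Icc j (n - 1), a i * g (i + 1) ω) * σ2 j) + σ2 n)) :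
    ∀ n m, 1 ≤ n → n ≤ m → m ≤ N →
      μ {ω | γ n ω < γTh} ≤ μ {ω | γ m ω < γTh} := by
  -- pointwise step : γ (n+1) ω ≤ γ n ω
  have step : ∀ n : ℕ, 1 ≤ n → n + 1 ≤ N → ∀ ω, γ (n + 1) ω ≤ γ n ω := by
    intro n hn hnN ω
    obtain ⟨k, rfl⟩ : ∃ k, n = k + 1 := ⟨n - 1, (Nat.succ_pred_eq_of_pos hn).symm⟩
    have hk2N : k + 2 ≤ N := hnN
    have h1 := hγ (k + 1) (by simp [Finset.mem_Icc]; omega) ω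
    have h2 := hγ (k + 2) (by simp [Finset.mem_Icc]; omega) ω
    simp only [Nat.add_sub_cancel] at h1 h2
    have hk21 : k + 2 - 1 = k + 1 := rfl
    rw [hk21] at h2
    set A : ℝ := ∏ i ∈ Finset.Icc 1 k, a i with hA
    set G : ℝ := ∏ i ∈ Finset.Icc 1 (k + 1), g i ω with hG
    set S : ℝ := ∑ j ∈ Finset.Icc 1 k, (∏ i ∈ Finset.Icc j k, a i * g (i + 1) ω) * σ2 j
      with hS
    set c : ℝ := a (k + 1) * g (k + 2) ω with hc
    -- rewrite products/sums for n = k+2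
    have prodA : ∏ i ∈ Finset.Icc 1 (k + 1), a i = A * a (k + 1) :=
      Finset.prod_Icc_succ_top (by omega) _
    have prodG : ∏ i ∈ Finset.Icc 1 (k + 2), g i ω = G * g (k + 2) ω :=
      Finset.prod_Icc_succ_top (by omega) _
    have sumS : ∑ j ∈ Finset.Icc 1 (k + 1), (∏ i ∈ Finset.Icc j (k + 1), a i * g (i + 1) ω) * σ2 j
        = S * c + c * σ2 (k + 1) := by
      rw [Finset.sum_Icc_succ_top (by omega)]
      have : ∀ j ∈ Finset.Icc 1 k,
          (∏ i ∈ Finset.Icc j (k + 1), a i * g (i + 1) ω) * σ2 j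
          = ((∏ i ∈ Finset.Icc j k, a i * g (i + 1) ω) * σ2 j) * c := by
        intro j hj
        rw [Finset.prod_Icc_succ_top (le_trans (Finset.mem_Icc.mp hj).2 (Nat.le_succ k))]
        ring
      rw [Finset.sum_congr rfl this, ← Finset.sum_mul, Finset.Icc_self, Finset.prod_singleton]
    -- positivity facts
    have hgpos : ∀ i ∈ Finset.Icc 1 N, (0:ℝ) ≤ g i ω := fun i hi => hg i hi ω
    have hSnn : 0 ≤ S := by
      apply Finset.sum_nonneg
      intro j hj
      simp only [Finset.mem_Icc] at hj
      apply mul_nonneg _ (le_of_lt (hσ j (by simp [Finset.mem_Icc]; omega)))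
      apply Finset.prod_nonneg
      intro i hi
      simp only [Finset.mem_Icc] at hi
      exact mul_nonneg (le_of_lt (ha i (by simp [Finset.mem_Icc]; omega)))
        (hg (i + 1) (by simp [Finset.mem_Icc]; omega) ω)
    have hcnn : 0 ≤ c :=
      mul_nonneg (le_of_lt (ha (k + 1) (by simp [Finset.mem_Icc]; omega)))
        (hg (k + 2) (by simp [Finset.mem_Icc]; omega) ω)
    have hσ1 : 0 < σ2 (k + 1) := hσ (k + 1) (by simp [Finset.mem_Icc]; omega)
    have hσ2 : 0 < σ2 (k + 2) := hσ (k + 2) (by simp [Finset.mem_Icc]; omega)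
    have hAnn : 0 ≤ A := Finset.prod_nonneg fun i hi => by
      simp only [Finset.mem_Icc] at hi
      exact le_of_lt (ha i (by simp [Finset.mem_Icc]; omega))
    have hGnn : 0 ≤ G := Finset.prod_nonneg fun i hi => by
      simp only [Finset.mem_Icc] at hi
      exact hg i (by simp [Finset.mem_Icc]; omega) ω
    have hD1 : 0 < S + σ2 (k + 1) := by linarith
    have hD2 : 0 < (S * c + c * σ2 (k + 1)) + σ2 (k + 2) := by nlinarith
    rw [h1, h2, prodA, prodG, sumS, div_le_div_iff₀ hD2 hD1]
    have heq : A * a (k + 1) * (G * g (k + 2) ω) * E1 * (S + σ2 (k + 1))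
        = A * G * E1 * (S * c + c * σ2 (k + 1)) := by rw [hc]; ring
    have hnn : 0 ≤ A * G * E1 * σ2 (k + 2) :=
      mul_nonneg (mul_nonneg (mul_nonneg hAnn hGnn) hE1.le) hσ2.le
    linarith
  -- pointwise monotone
  have mono : ∀ n m, 1 ≤ n → n ≤ m → m ≤ N → ∀ ω, γ m ω ≤ γ n ω := by
    intro n m hn hnm hmN ω
    induction m, hnm using Nat.le_induction with
    | base => exact le_rfl
    | succ m hm ih =>
      exact le_trans (step m (le_trans hn hm) hmN ω) (ih (by omega))
  intro n m hn hnm hmN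
  apply measure_mono
  intro ω hω
  exact lt_of_le_of_lt (mono n m hn hnm hmN ω) hω
end
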